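/- Let m₁, m₂, m₃, f, α : ℝ → ℝ satisfy the principal-line Darboux system m₁' = m₂·cos α + m₃·sin α − f, m₂' = −m₁·cos α, m₃' = −m₁·sin α on ℝ, where m₁, m₂, m₃ are differentiable, f is twice differentiable, and α is twice differentiable. Then m₁ is three times differentiable and satisfies m₁''' + m₁' + f'' + (α')²·(m₁' + f) − α''·(m₃·cos α − m₂·sin α) = 0 on ℝ. -/

import Mathlib

/-- Principal-line case: the coefficients of the principal-line Darboux system
give a third-order ODE for `m₁` (paper's equation (19), with the indefinite
integrals evaluated as `-m₂` and `-m₃`). -/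
theorem principal_third_order_ode
    (m₁ m₂ m₃ f α : ℝ → ℝ)
    (hm₁ : Differentiable ℝ m₁) (hm₂ : Differentiable ℝ m₂)
    (hm₃ : Differentiable ℝ m₃)
    (hf : Differentiable ℝ f) (hf' : Differentiable ℝ (deriv f))
    (hα : Differentiable ℝ α) (hα' : Differentiable ℝ (deriv α))
    (h1 : ∀ θ, deriv m₁ θ = m₂ θ * Real.cos (α θ) + m₃ θ * Real.sin (α θ) - f θ)
    (h2 : ∀ θ, deriv m₂ θ = -(m₁ θ) * Real.cos (α θ))
    (h3 : ∀ θ, deriv m₃ θ = -(m₁ θ) * Real.sin (α θ)) :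
    Differentiable ℝ (deriv m₁) ∧ Differentiable ℝ (deriv (deriv m₁)) ∧
      ∀ θ, deriv (deriv (deriv m₁)) θ + deriv m₁ θ + deriv (deriv f) θ
          + (deriv α θ) ^ 2 * (deriv m₁ θ + f θ)
          - deriv (deriv α) θ * (m₃ θ * Real.cos (α θ) - m₂ θ * Real.sin (α θ))
          = 0 := by
  have hcos : ∀ x, HasDerivAt (fun θ => Real.cos (α θ)) (-Real.sin (α x) * deriv α x) x :=
    fun x => (Real.hasDerivAt_cos (α x)).comp x (hα x).hasDerivAt
  have hsin : ∀ x, HasDerivAt (fun θ => Real.sin (α θ)) (Real.cos (α x) * deriv α x) x :=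
    fun x => (Real.hasDerivAt_sin (α x)).comp x (hα x).hasDerivAt
  have hm1' : deriv m₁ = fun θ => m₂ θ * Real.cos (α θ) + m₃ θ * Real.sin (α θ) - f θ :=
    funext h1
  have key2 : ∀ x, HasDerivAt (deriv m₁)
      (-(m₁ x) + deriv α x * (m₃ x * Real.cos (α x) - m₂ x * Real.sin (α x)) - deriv f x) x := by
    intro x
    rw [hm1']
    have h := (((hm₂ x).hasDerivAt.mul (hcos x)).add
      ((hm₃ x).hasDerivAt.mul (hsin x))).sub (hf x).hasDerivAt
    refine h.congr_deriv (Eq.symm ?_)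
    rw [h2, h3]
    linear_combination m₁ x * Real.sin_sq_add_cos_sq (α x)
  have hd2 : Differentiable ℝ (deriv m₁) := fun x => (key2 x).differentiableAt
  have hm1'' : deriv (deriv m₁) = fun x =>
      -(m₁ x) + deriv α x * (m₃ x * Real.cos (α x) - m₂ x * Real.sin (α x)) - deriv f x :=
    funext fun x => (key2 x).deriv
  have key3 : ∀ x, HasDerivAt (deriv (deriv m₁))
      (-(deriv m₁ x) + (deriv (deriv α) x * (m₃ x * Real.cos (α x) - m₂ x * Real.sin (α x))
        + deriv α x * ((deriv m₃ x * Real.cos (α x) + m₃ x * (-Real.sin (α x) * deriv α x))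
          - (deriv m₂ x * Real.sin (α x) + m₂ x * (Real.cos (α x) * deriv α x))))
        - deriv (deriv f) x) x := by
    intro x
    rw [hm1'']
    exact (((hm₁ x).hasDerivAt.neg).add
      ((hα' x).hasDerivAt.mul
        (((hm₃ x).hasDerivAt.mul (hcos x)).sub ((hm₂ x).hasDerivAt.mul (hsin x))))).sub
      (hf' x).hasDerivAt
  refine ⟨hd2, fun x => (key3 x).differentiableAt, fun x => ?_⟩
  rw [(key3 x).deriv, h1 x, h2 x, h3 x]
  ring
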